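/- arXiv:0712.3725 — 2 statements merged into one kernel-verified Lean document; each statement's English description precedes it below -/
import Mathlib

section
/- For y ∈ (0,1], the symmetrized Marchenko–Pastur density integrates to 1: ∫ p̃_y(x) dx over [-(1+√y), -(1-√y)] ∪ [(1-√y), (1+√y)] equals 1. -/
open Real MeasureTheory

set_option maxHeartbeats 2000000

noncomputable def MPF (a b : ℝ) (x : ℝ) : ℝ :=
  Real.sqrt ((x^2-a)*(b-x^2))/2 + (a+b)/4 * Real.arcsin ((2*x^2-a-b)/(b-a))
    - Real.sqrt (a*b)/2 * Real.arcsin (((a+b)*x^2-2*a*b)/((b-a)*x^2))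

lemma MPF_deriv (a b : ℝ) (ha : 0 < a) (hab : a < b) (x : ℝ)
    (hxa : Real.sqrt a < x) (hxb : x < Real.sqrt b) :
    HasDerivAt (MPF a b) (Real.sqrt ((x^2-a)*(b-x^2)) / x) x := by
  have hx0 : 0 < x := (Real.sqrt_pos.2 ha).trans hxa
  have hxa2 : a < x^2 := by
    have := Real.sq_sqrt ha.le
    nlinarith [Real.sqrt_pos.2 ha]
  have hxb2 : x^2 < b := by
    have := Real.sq_sqrt (ha.trans hab).le
    nlinarith [Real.sqrt_nonneg b]
  have hba : 0 < b - a := sub_pos.2 hab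
  have hb0 : 0 < b := ha.trans hab
  have hprod : 0 < (x^2-a)*(b-x^2) := mul_pos (by linarith) (by linarith)
  set s := Real.sqrt ((x^2-a)*(b-x^2)) with hs
  have hs0 : 0 < s := Real.sqrt_pos.2 hprod
  have hs2 : s^2 = (x^2-a)*(b-x^2) := Real.sq_sqrt hprod.le
  have hab0 : 0 < a*b := mul_pos ha hb0
  set r := Real.sqrt (a*b) with hr
  have hr0 : 0 < r := Real.sqrt_pos.2 hab0
  have hr2 : r^2 = a*b := Real.sq_sqrt hab0.le
  -- inner functions
  have hq : HasDerivAt (fun x : ℝ => (x^2-a)*(b-x^2))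
      ((2*x)*(b-x^2) + (x^2-a)*(-(2*x))) x := by
    have h1 : HasDerivAt (fun x : ℝ => x^2-a) (2*x) x := by
      simpa using ((hasDerivAt_pow 2 x).sub_const a)
    have h2 : HasDerivAt (fun x : ℝ => b-x^2) (-(2*x)) x := by
      simpa using ((hasDerivAt_pow 2 x).const_sub b)
    exact h1.mul h2
  have hS : HasDerivAt (fun x : ℝ => Real.sqrt ((x^2-a)*(b-x^2)))
      (((2*x)*(b-x^2) + (x^2-a)*(-(2*x))) / (2*s)) x :=
    hq.sqrt hprod.ne'
  -- first arcsin
  have hg1 : HasDerivAt (fun x : ℝ => (2*x^2-a-b)/(b-a)) (4*x/(b-a)) x := by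
    have h := (((hasDerivAt_pow 2 x).const_mul 2).sub_const a).sub_const b
    have h2 := h.div_const (b-a)
    exact h2.congr_deriv (by push_cast; ring)
  have hw1 : (2*x^2-a-b)/(b-a) ≠ -1 ∧ (2*x^2-a-b)/(b-a) ≠ 1 := by
    constructor <;> intro h <;> rw [div_eq_iff hba.ne'] at h <;> nlinarith
  have hA1 : HasDerivAt (fun x : ℝ => Real.arcsin ((2*x^2-a-b)/(b-a)))
      ((1 / Real.sqrt (1 - ((2*x^2-a-b)/(b-a))^2)) * (4*x/(b-a))) x :=
    (Real.hasDerivAt_arcsin hw1.1 hw1.2).comp x hg1 (h₂ := Real.arcsin)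
  have hsq1 : Real.sqrt (1 - ((2*x^2-a-b)/(b-a))^2) = 2*s/(b-a) := by
    rw [show 1 - ((2*x^2-a-b)/(b-a))^2 = (2*s/(b-a))^2 by
      field_simp
      nlinarith [hs2]]
    exact Real.sqrt_sq (by positivity)
  -- second arcsin
  have hden : (b-a)*x^2 ≠ 0 := by positivity
  have hg2 : HasDerivAt (fun x : ℝ => ((a+b)*x^2-2*a*b)/((b-a)*x^2))
      (((a+b)*(2*x)*((b-a)*x^2) - ((a+b)*x^2-2*a*b)*((b-a)*(2*x))) / ((b-a)*x^2)^2) x := by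
    have hnum : HasDerivAt (fun x : ℝ => (a+b)*x^2-2*a*b) ((a+b)*(2*x)) x := by
      simpa using (((hasDerivAt_pow 2 x).const_mul (a+b)).sub_const (2*a*b))
    have hden' : HasDerivAt (fun x : ℝ => (b-a)*x^2) ((b-a)*(2*x)) x := by
      simpa using ((hasDerivAt_pow 2 x).const_mul (b-a))
    exact hnum.div hden' hden
  have hw2 : ((a+b)*x^2-2*a*b)/((b-a)*x^2) ≠ -1 ∧ ((a+b)*x^2-2*a*b)/((b-a)*x^2) ≠ 1 := by
    constructor <;> intro h <;> rw [div_eq_iff hden] at h <;> nlinarith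
  have hA2 : HasDerivAt (fun x : ℝ => Real.arcsin (((a+b)*x^2-2*a*b)/((b-a)*x^2)))
      ((1 / Real.sqrt (1 - (((a+b)*x^2-2*a*b)/((b-a)*x^2))^2)) *
        (((a+b)*(2*x)*((b-a)*x^2) - ((a+b)*x^2-2*a*b)*((b-a)*(2*x))) / ((b-a)*x^2)^2)) x :=
    (Real.hasDerivAt_arcsin hw2.1 hw2.2).comp x hg2 (h₂ := Real.arcsin)
  have hsq2 : Real.sqrt (1 - (((a+b)*x^2-2*a*b)/((b-a)*x^2))^2) = 2*r*s/((b-a)*x^2) := by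
    rw [show 1 - (((a+b)*x^2-2*a*b)/((b-a)*x^2))^2 = (2*r*s/((b-a)*x^2))^2 by
      field_simp
      nlinarith [hs2, hr2]]
    exact Real.sqrt_sq (by positivity)
  have := ((hS.div_const 2).add (hA1.const_mul ((a+b)/4))).sub (hA2.const_mul (r/2))
  refine this.congr_deriv ?_
  symm
  rw [hsq1, hsq2]
  have key : s / x = (2*((x^2-a)*(b-x^2)))/(2*s*x) := by
    rw [← hs2]; field_simp
  rw [key]
  field_simp
  ring

lemma MPF_cont (a b : ℝ) (ha : 0 < a) (hab : a < b) :
    ContinuousOn (MPF a b) (Set.Icc (Real.sqrt a) (Real.sqrt b)) := by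
  have hsub : Set.Icc (Real.sqrt a) (Real.sqrt b) ⊆ {x : ℝ | x ≠ 0} := by
    intro x hx
    exact (lt_of_lt_of_le (Real.sqrt_pos.2 ha) hx.1).ne'
  have c1 : Continuous (fun x : ℝ => Real.sqrt ((x^2-a)*(b-x^2))/2) := by fun_prop
  have c2 : Continuous (fun x : ℝ => (a+b)/4 * Real.arcsin ((2*x^2-a-b)/(b-a))) :=
    continuous_const.mul (Real.continuous_arcsin.comp (by fun_prop))
  have c3 : ContinuousOn (fun x : ℝ =>
      Real.sqrt (a*b)/2 * Real.arcsin (((a+b)*x^2-2*a*b)/((b-a)*x^2))) {x : ℝ | x ≠ 0} := by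
    apply continuousOn_const.mul
    apply Real.continuous_arcsin.comp_continuousOn
    apply ContinuousOn.div (by fun_prop) (by fun_prop)
    intro x hx
    have hx0 : x ≠ 0 := hx
    have : b - a ≠ 0 := (sub_pos.2 hab).ne'
    positivity
  exact ((c1.add c2).continuousOn).sub (c3.mono hsub)

lemma MPF_integral (a b : ℝ) (ha : 0 < a) (hab : a < b) :
    ∫ x in Real.sqrt a..Real.sqrt b, Real.sqrt ((x^2-a)*(b-x^2)) / x
      = (a+b)*π/4 - Real.sqrt (a*b)*π/2 := by
  have hb0 : 0 < b := ha.trans hab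
  have hle : Real.sqrt a ≤ Real.sqrt b := Real.sqrt_le_sqrt hab.le
  have hint : IntervalIntegrable (fun x => Real.sqrt ((x^2-a)*(b-x^2)) / x) volume
      (Real.sqrt a) (Real.sqrt b) := by
    apply ContinuousOn.intervalIntegrable
    rw [Set.uIcc_of_le hle]
    apply ContinuousOn.div (by fun_prop) continuousOn_id
    intro x hx
    exact (lt_of_lt_of_le (Real.sqrt_pos.2 ha) hx.1).ne'
  have := intervalIntegral.integral_eq_sub_of_hasDeriv_right_of_le hle
    (MPF_cont a b ha hab)
    (fun x hx => ((MPF_deriv a b ha hab x hx.1 hx.2).hasDerivWithinAt))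
    hint
  rw [this]
  have hsa : (Real.sqrt a)^2 = a := Real.sq_sqrt ha.le
  have hsb : (Real.sqrt b)^2 = b := Real.sq_sqrt hb0.le
  have hba : b - a ≠ 0 := (sub_pos.2 hab).ne'
  unfold MPF
  rw [hsa, hsb]
  rw [show (b-a)*(b-b) = 0 by ring, show (a-a)*(b-a) = 0 by ring, Real.sqrt_zero]
  rw [show (2*b-a-b)/(b-a) = 1 by rw [show 2*b-a-b = b-a by ring, div_self hba]]
  rw [show (2*a-a-b)/(b-a) = -1 by rw [show 2*a-a-b = -(b-a) by ring, neg_div, div_self hba]]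
  rw [show ((a+b)*b-2*a*b)/((b-a)*b) = 1 by
    rw [show (a+b)*b-2*a*b = (b-a)*b by ring, div_self (by positivity)]]
  rw [show ((a+b)*a-2*a*b)/((b-a)*a) = -1 by
    rw [show (a+b)*a-2*a*b = -((b-a)*a) by ring, neg_div, div_self (by positivity)]]
  rw [Real.arcsin_one, Real.arcsin_neg_one]
  ring

/-- For `y ∈ (0,1]`, the symmetrized Marchenko–Pastur density integrates to `1` over
`[-(1+√y), -(1-√y)] ∪ [(1-√y), (1+√y)]`. -/
theorem symmetrized_MP_density_integrates_to_one
    (y : ℝ) (hy0 : 0 < y) (hy1 : y ≤ 1)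
    (a b : ℝ) (ha : a = (1 - Real.sqrt y) ^ 2) (hb : b = (1 + Real.sqrt y) ^ 2)
    (pt : ℝ → ℝ)
    (hpt : ∀ x, pt x =
      if a ≤ x ^ 2 ∧ x ^ 2 ≤ b then
        (1 / (2 * π * y * |x|)) * Real.sqrt ((x ^ 2 - a) * (b - x ^ 2))
      else 0) :
    ∫ x in (Set.Icc (-(1 + Real.sqrt y)) (-(1 - Real.sqrt y))
        ∪ Set.Icc (1 - Real.sqrt y) (1 + Real.sqrt y)), pt x = 1 := by
  have ht0 : 0 < Real.sqrt y := Real.sqrt_pos.2 hy0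
  have ht1 : Real.sqrt y ≤ 1 := by
    rw [show (1:ℝ) = Real.sqrt 1 from (Real.sqrt_one).symm]
    exact Real.sqrt_le_sqrt hy1
  have hy : Real.sqrt y ^ 2 = y := Real.sq_sqrt hy0.le
  set t := Real.sqrt y with htdef
  set α := 1 - t with hαdef
  set β := 1 + t with hβdef
  have hα0 : 0 ≤ α := by simp [hαdef]; linarith
  have hβ0 : 0 < β := by simp [hβdef]; linarith
  have hαβ : α ≤ β := by simp [hαdef, hβdef]; linarith
  have ha0 : 0 ≤ a := ha ▸ sq_nonneg _
  have hb0 : 0 < b := by rw [hb]; positivity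
  have hab : a ≤ b := by rw [ha, hb]; nlinarith
  have hπ : (0:ℝ) < π := Real.pi_pos
  -- pt is even
  have hpt_even : ∀ x, pt (-x) = pt x := by
    intro x; rw [hpt, hpt]; simp [neg_sq, abs_neg]
  -- measurability of pt
  have hmeas : Measurable pt := by
    have : pt = fun x => if a ≤ x ^ 2 ∧ x ^ 2 ≤ b then
        (1 / (2 * π * y * |x|)) * Real.sqrt ((x ^ 2 - a) * (b - x ^ 2)) else 0 := funext hpt
    rw [this]
    have hcond : MeasurableSet {x : ℝ | a ≤ x ^ 2 ∧ x ^ 2 ≤ b} :=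
      (measurableSet_le measurable_const (measurable_id.pow_const 2)).inter
        (measurableSet_le (measurable_id.pow_const 2) measurable_const)
    exact Measurable.ite hcond
      ((measurable_const.div (by fun_prop)).mul (by fun_prop)) measurable_const
  -- uniform bound
  have hbound : ∀ x, ‖pt x‖ ≤ Real.sqrt b / (2*π*y) := by
    intro x
    rw [hpt, Real.norm_eq_abs]
    split_ifs with h
    · rcases eq_or_ne x 0 with rfl | hx0
      · simp
        positivity
      · have hax : 0 ≤ x^2 - a := by linarith [h.1]
        have hbx : 0 ≤ b - x^2 := by linarith [h.2]
        have habs : 0 < |x| := abs_pos.2 hx0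
        have h1 : Real.sqrt ((x^2-a)*(b-x^2)) ≤ |x| * Real.sqrt b := by
          have : (x^2-a)*(b-x^2) ≤ x^2 * b := by nlinarith [sq_nonneg x]
          calc Real.sqrt ((x^2-a)*(b-x^2)) ≤ Real.sqrt (x^2 * b) := Real.sqrt_le_sqrt this
            _ = |x| * Real.sqrt b := by
                rw [Real.sqrt_mul (sq_nonneg x), Real.sqrt_sq_eq_abs]
        have h2 : (0:ℝ) ≤ 1/(2*π*y*|x|) := by positivity
        rw [abs_of_nonneg (by positivity)]
        calc 1/(2*π*y*|x|) * Real.sqrt ((x^2-a)*(b-x^2))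
            ≤ 1/(2*π*y*|x|) * (|x| * Real.sqrt b) := by
              exact mul_le_mul_of_nonneg_left h1 h2
          _ = Real.sqrt b / (2*π*y) := by field_simp
    · simp; positivity
  have hint : ∀ c d : ℝ, IntegrableOn pt (Set.Icc c d) := by
    intro c d
    apply Measure.integrableOn_of_bounded (M := Real.sqrt b / (2*π*y))
    · exact (measure_Icc_lt_top).ne
    · exact hmeas.aestronglyMeasurable
    · exact ae_of_all _ hbound
  -- split the union
  have hdisj : AEDisjoint volume (Set.Icc (-β) (-α)) (Set.Icc α β) := by
    apply measure_mono_null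
      (show Set.Icc (-β) (-α) ∩ Set.Icc α β ⊆ Set.Icc α (-α) from
        fun x hx => ⟨hx.2.1, hx.1.2⟩)
    rw [Real.volume_Icc]
    simp only [ENNReal.ofReal_eq_zero]
    linarith
  rw [integral_union_ae hdisj measurableSet_Icc.nullMeasurableSet (hint _ _) (hint _ _)]
  -- symmetry: negative side equals positive side
  have hsymm : ∫ x in Set.Icc (-β) (-α), pt x = ∫ x in Set.Icc α β, pt x := by
    rw [integral_Icc_eq_integral_Ioc, integral_Icc_eq_integral_Ioc,
      ← intervalIntegral.integral_of_le (neg_le_neg hαβ),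
      ← intervalIntegral.integral_of_le hαβ,
      ← intervalIntegral.integral_comp_neg]
    simp only [hpt_even]
  rw [hsymm]
  -- now evaluate the positive side
  have hhalf : ∫ x in Set.Icc α β, pt x = 1/2 := by
    rcases eq_or_lt_of_le hy1 with h1 | h1
    · -- y = 1
      subst h1
      have ht : t = 1 := by rw [htdef, Real.sqrt_one]
      have hα' : α = 0 := by rw [hαdef, ht]; ring
      have hβ' : β = 2 := by rw [hβdef, ht]; ring
      have ha' : a = 0 := by rw [ha, hα']; ring
      have hb' : b = 4 := by rw [hb, hβ']; norm_num
      have hEq : Set.EqOn pt (fun x => Real.sqrt (4 - x^2) / (2*π)) (Set.Ioc 0 2) := by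
        intro x hx
        have hx0 : 0 < x := hx.1
        have hx2 : x^2 ≤ 4 := by nlinarith [hx.2]
        rw [hpt, if_pos ⟨by rw [ha']; positivity, by rw [hb']; linarith⟩, ha', hb']
        rw [abs_of_pos hx0, sub_zero,
          Real.sqrt_mul (sq_nonneg x), Real.sqrt_sq hx0.le]
        field_simp
      rw [hα', hβ', integral_Icc_eq_integral_Ioc, setIntegral_congr_fun measurableSet_Ioc hEq,
        ← intervalIntegral.integral_of_le (by norm_num : (0:ℝ) ≤ 2)]
      have hc : Continuous (fun x : ℝ => Real.sqrt (1 - x^2)) := by fun_prop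
      have hi1 : IntervalIntegrable (fun x : ℝ => Real.sqrt (1 - x^2)) volume (-1) 0 :=
        hc.intervalIntegrable _ _
      have hi2 : IntervalIntegrable (fun x : ℝ => Real.sqrt (1 - x^2)) volume 0 1 :=
        hc.intervalIntegrable _ _
      have e0 : ∫ x in (-1:ℝ)..0, Real.sqrt (1 - x^2) = ∫ x in (0:ℝ)..1, Real.sqrt (1 - x^2) := by
        have h := intervalIntegral.integral_comp_neg (a := (0:ℝ)) (b := 1)
          (fun x => Real.sqrt (1 - x^2))
        simp only [neg_zero, neg_sq] at h
        exact h.symm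
      have e1 : ∫ x in (0:ℝ)..1, Real.sqrt (1 - x^2) = π/4 := by
        have h3 := intervalIntegral.integral_add_adjacent_intervals hi1 hi2
        have h4 := integral_sqrt_one_sub_sq
        rw [e0] at h3
        linarith [h3, h4]
      have e2 : ∫ x in (0:ℝ)..2, Real.sqrt (4 - x^2) = π := by
        have h5 := intervalIntegral.mul_integral_comp_mul_left (a := 0) (b := 1) (c := 2)
          (f := fun x => Real.sqrt (4 - x^2))
        have h6 : (fun x : ℝ => Real.sqrt (4 - (2*x)^2)) = fun x : ℝ => 2 * Real.sqrt (1 - x^2) := by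
          funext x
          rw [show (4:ℝ) - (2*x)^2 = 4*(1 - x^2) by ring, Real.sqrt_mul (by norm_num),
            show Real.sqrt 4 = 2 by rw [show (4:ℝ) = 2^2 by norm_num, Real.sqrt_sq (by norm_num)]]
        rw [h6] at h5
        rw [intervalIntegral.integral_const_mul, e1] at h5
        norm_num at h5
        linarith [h5.symm]
      rw [show (fun x => Real.sqrt (4 - x^2) / (2*π)) = fun x => (1/(2*π)) * Real.sqrt (4 - x^2) by
        funext x; ring]
      rw [intervalIntegral.integral_const_mul, e2]
      field_simp
    · -- y < 1
      have htlt : t < 1 := by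
        rw [htdef, show (1:ℝ) = Real.sqrt 1 from (Real.sqrt_one).symm]
        exact Real.sqrt_lt_sqrt hy0.le h1
      have hα' : 0 < α := by rw [hαdef]; linarith
      have ha' : 0 < a := ha ▸ pow_pos hα' 2
      have hab' : a < b := by rw [ha, hb, hαdef, hβdef]; nlinarith
      have hsa : Real.sqrt a = α := by rw [ha, Real.sqrt_sq hα0]
      have hsb : Real.sqrt b = β := by rw [hb, Real.sqrt_sq hβ0.le]
      have hEq : Set.EqOn pt
          (fun x => (1/(2*π*y)) * (Real.sqrt ((x^2-a)*(b-x^2)) / x)) (Set.Icc α β) := by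
        intro x hx
        have hx0 : 0 < x := lt_of_lt_of_le hα' hx.1
        have hx2a : a ≤ x^2 := by rw [ha]; exact pow_le_pow_left₀ hα0 hx.1 2
        have hx2b : x^2 ≤ b := by rw [hb]; exact pow_le_pow_left₀ hx0.le hx.2 2
        rw [hpt, if_pos ⟨hx2a, hx2b⟩, abs_of_pos hx0]
        field_simp
      rw [integral_Icc_eq_integral_Ioc, setIntegral_congr_fun measurableSet_Ioc
        (hEq.mono Set.Ioc_subset_Icc_self),
        ← intervalIntegral.integral_of_le hαβ, intervalIntegral.integral_const_mul,
        ← hsa, ← hsb, MPF_integral a b ha' hab']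
      have habsum : a + b = 2 + 2*y := by
        rw [ha, hb, hαdef, hβdef]; linear_combination 2*hy
      have habprod : Real.sqrt (a*b) = 1 - y := by
        rw [show a*b = (1-y)^2 by
          rw [ha, hb, hαdef, hβdef]; linear_combination (y + t^2 - 2)*hy]
        exact Real.sqrt_sq (by linarith)
      rw [habsum, habprod]
      field_simp
      ring
  rw [hhalf]
  norm_num
end

section
/- (Trace difference identity) Let A be an n×n symmetric matrix with A and A_k nonsingular resolvents at z = u+iv, v>0. Then Tr(A - zI_n)^{-1} - Tr(A_k - zI_{n-1})^{-1} = (1 + a_k'(A_k - zI_{n-1})^{-2} a_k) / (a_{kk} - z - a_k'(A_k - zI_{n-1})^{-1} a_k), where a_k is the k-th row of A with the k-th entry removed. -/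
open Matrix

/-- Trace difference identity: for a real symmetric `A`, `z` in the upper half-plane,
`Tr(A - zI)⁻¹ - Tr(A_k - zI)⁻¹
  = (1 + a_k'(A_k - zI)⁻² a_k)/(a_{kk} - z - a_k'(A_k - zI)⁻¹ a_k)`,
where `a_k` is the `k`-th row of `A` with the `k`-th entry removed. -/
theorem resolvent_trace_difference_identity
    (n : ℕ) (A : Matrix (Fin (n + 1)) (Fin (n + 1)) ℝ) (hA : A.IsSymm)
    (k : Fin (n + 1)) (z : ℂ) (hz : 0 < z.im)
    (Ak : Matrix (Fin n) (Fin n) ℝ)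
    (hAk : Ak = A.submatrix k.succAbove k.succAbove)
    (ak : Fin n → ℂ) (hak : ak = fun j => (A k (k.succAbove j) : ℂ))
    (hAinv : IsUnit (A.map (Complex.ofReal) - z • 1).det)
    (hAkinv : IsUnit (Ak.map (Complex.ofReal) - z • 1).det) :
    ((A.map (Complex.ofReal) - z • 1)⁻¹).trace
        - ((Ak.map (Complex.ofReal) - z • 1)⁻¹).trace
      = (1 + ak ⬝ᵥ (((Ak.map (Complex.ofReal) - z • 1)⁻¹ ^ 2) *ᵥ ak))
        / ((A k k : ℂ) - z - ak ⬝ᵥ ((Ak.map (Complex.ofReal) - z • 1)⁻¹ *ᵥ ak)) := by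
  set B := A.map (Complex.ofReal) - z • 1 with hB
  set C := Ak.map (Complex.ofReal) - z • 1 with hC
  haveI iB : Invertible B := B.invertibleOfIsUnitDet hAinv
  haveI iC : Invertible C := C.invertibleOfIsUnitDet hAkinv
  set e : Fin (n + 1) ≃ (Fin n) ⊕ Unit :=
    (finSuccEquiv' k).trans (Equiv.optionEquivSumPUnit (Fin n)) with he
  have he1 : ∀ j : Fin n, e.symm (Sum.inl j) = k.succAbove j := by
    intro j; simp [he, finSuccEquiv'_symm_some]
  have he2 : ∀ u : Unit, e.symm (Sum.inr u) = k := by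
    intro u; simp [he, finSuccEquiv'_symm_none]
  set col : Matrix (Fin n) Unit ℂ := fun i _ => ak i with hcol
  set row : Matrix Unit (Fin n) ℂ := fun _ j => ak j with hrow
  set d : Matrix Unit Unit ℂ := fun _ _ => (A k k : ℂ) - z with hd
  have hM : B.submatrix e.symm e.symm = fromBlocks C col row d := by
    ext i j
    cases i with
    | inl i => cases j with
      | inl j =>
          simp [Matrix.submatrix_apply, he1, hB, hC, hAk, fromBlocks, Matrix.one_apply,
            Fin.succAbove_right_injective.eq_iff]
      | inr j =>
          have hne : k.succAbove i ≠ k := Fin.succAbove_ne k i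
          simp [Matrix.submatrix_apply, he1, he2, hB, hcol, hak, fromBlocks, Matrix.one_apply,
            hne, hA.apply]
    | inr i => cases j with
      | inl j =>
          have hne : k ≠ k.succAbove j := (Fin.succAbove_ne k j).symm
          simp [Matrix.submatrix_apply, he1, he2, hB, hrow, hak, fromBlocks, Matrix.one_apply, hne]
      | inr j =>
          simp [Matrix.submatrix_apply, he2, hB, hd, fromBlocks, Matrix.one_apply]
  haveI iM : Invertible (fromBlocks C col row d) := by
    rw [← hM]; exact submatrixEquivInvertible B e.symm e.symm
  haveI iS : Invertible (d - row * ⅟C * col) := invertibleOfFromBlocks₁₁Invertible C col row d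
  set S := d - row * ⅟C * col with hS
  set s : ℂ := ((A k k : ℂ) - z - ak ⬝ᵥ (C⁻¹ *ᵥ ak)) with hs
  have hent : ∀ M : Matrix (Fin n) (Fin n) ℂ,
      (row * M * col) PUnit.unit PUnit.unit = ak ⬝ᵥ (M *ᵥ ak) := by
    intro M
    simp only [Matrix.mul_apply, dotProduct, Matrix.mulVec, Finset.sum_mul,
      Finset.mul_sum]
    rw [Finset.sum_comm]
    exact Finset.sum_congr rfl fun i _ => Finset.sum_congr rfl fun j _ => by
      simp only [hrow, hcol]; ring
  have hSentry : S PUnit.unit PUnit.unit = s := by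
    have h := hent (⅟C)
    simp only [hS, Matrix.sub_apply]
    rw [h, invOf_eq_nonsing_inv, hs]
  have hsne : s ≠ 0 := by
    have hU : IsUnit S.det := (Matrix.isUnit_iff_isUnit_det S).mp (isUnit_of_invertible S)
    rw [Matrix.det_unique] at hU
    simpa [hSentry] using hU.ne_zero
  have hSinv : ∀ u v : PUnit, (⅟S) u v = s⁻¹ := by
    intro u v
    have h1 := congrFun (congrFun (mul_invOf_self S) PUnit.unit) PUnit.unit
    simp only [Matrix.mul_apply, Finset.univ_unique, Finset.sum_singleton, Matrix.one_apply_eq,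
      hSentry] at h1
    cases u; cases v
    field_simp at h1 ⊢
    linear_combination h1
  have hSinv1 : ⅟S = s⁻¹ • (1 : Matrix PUnit PUnit ℂ) := by
    ext u v; cases u; cases v; simp [hSinv, Matrix.one_apply]
  have hMinv : (fromBlocks C col row d)⁻¹ =
      fromBlocks (⅟C + ⅟C * col * ⅟S * row * ⅟C) (-(⅟C * col * ⅟S))
        (-(⅟S * row * ⅟C)) (⅟S) := by
    rw [← invOf_eq_nonsing_inv, invOf_fromBlocks₁₁_eq]
  have htrB : B⁻¹.trace = (fromBlocks C col row d)⁻¹.trace := by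
    rw [← hM, Matrix.inv_submatrix_equiv]
    simp only [Matrix.trace, Matrix.diag_apply, Matrix.submatrix_apply]
    exact (Equiv.sum_comp e.symm fun y => B⁻¹ y y).symm
  have htrFB : ∀ (P : Matrix (Fin n) (Fin n) ℂ) (Q : Matrix (Fin n) PUnit ℂ)
      (R : Matrix PUnit (Fin n) ℂ) (T : Matrix PUnit PUnit ℂ),
      (fromBlocks P Q R T).trace = P.trace + T PUnit.unit PUnit.unit := by
    intro P Q R T
    simp [Matrix.trace, Fintype.sum_sum_type, Matrix.diag]
  have key : (⅟C * col * ⅟S * row * ⅟C).trace = s⁻¹ * (ak ⬝ᵥ ((C⁻¹ * C⁻¹) *ᵥ ak)) := by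
    have h1 : ⅟C * col * ⅟S * row * ⅟C = (⅟C * col) * (⅟S * (row * ⅟C)) := by
      simp only [Matrix.mul_assoc]
    rw [h1, Matrix.trace_mul_comm]
    have h2 : (⅟S * (row * ⅟C)) * (⅟C * col) = ⅟S * (row * (⅟C * ⅟C) * col) := by
      simp only [Matrix.mul_assoc]
    rw [h2, hSinv1, Matrix.smul_mul, Matrix.one_mul, Matrix.trace_smul]
    have h3 : (row * (⅟C * ⅟C) * col).trace = (row * (⅟C * ⅟C) * col) PUnit.unit PUnit.unit := by
      simp [Matrix.trace]
    rw [h3, hent (⅟C * ⅟C), invOf_eq_nonsing_inv]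
    simp [smul_eq_mul]
  have hCinv : (⅟C : Matrix (Fin n) (Fin n) ℂ) = C⁻¹ := invOf_eq_nonsing_inv C
  rw [htrB, hMinv, htrFB, hSinv PUnit.unit PUnit.unit, Matrix.trace_add, key, hCinv]
  rw [pow_two]
  field_simp
  ring
end
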